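/- Let A ⊆ B be an inclusion of standard ℕ^2-graded algebras over a field k given by A = k[x_1,x_2,y_1,y_2] ↪ B = k[x_1,x_2,x_3,y_1,y_2,y_3]/(x_3·(y_1,y_2,y_3), y_3·(x_1,x_2,x_3)) with deg(x_i) = (1,0), deg(y_i) = (0,1). Then B/(0 :_B B_{++}) ≅ B/(x_3,y_3) ≅ k[x_1,x_2,y_1,y_2], the induced morphism BiProj(B) → BiProj(A) = P^1 × P^1 is an isomorphism, yet the ring extension A ⊆ B is not integral (x_3 is not integral over A). -/

import Mathlib

open MvPolynomial

noncomputable section BiProjAux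
variable (k : Type*) [Field k]

/-- Auxiliary projection `k[X₀,…,X₅] → k[X₀,X₁,X₃,X₄] ≅ k[x₁,x₂,y₁,y₂]`
killing `X₂` and `X₅`. -/
def psiAux : MvPolynomial (Fin 6) k →ₐ[k] MvPolynomial (Fin 4) k :=
  aeval ![X 0, X 1, 0, X 2, X 3, 0]

/-- Auxiliary section of `psiAux`. -/
def sAux : MvPolynomial (Fin 4) k →ₐ[k] MvPolynomial (Fin 6) k :=
  aeval ![X 0, X 1, X 3, X 4]

/-- Auxiliary evaluation keeping only `X₂ = x₃`. -/
def thetaAux : MvPolynomial (Fin 6) k →ₐ[k] Polynomial k :=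
  aeval ![0, 0, Polynomial.X, 0, 0, 0]

@[simp] lemma psiAux_X0 : psiAux k (X 0) = X 0 := by simp only [psiAux, aeval_X]; rfl
@[simp] lemma psiAux_X1 : psiAux k (X 1) = X 1 := by simp only [psiAux, aeval_X]; rfl
@[simp] lemma psiAux_X2 : psiAux k (X 2) = 0 := by simp only [psiAux, aeval_X]; rfl
@[simp] lemma psiAux_X3 : psiAux k (X 3) = X 2 := by simp only [psiAux, aeval_X]; rfl
@[simp] lemma psiAux_X4 : psiAux k (X 4) = X 3 := by simp only [psiAux, aeval_X]; rfl
@[simp] lemma psiAux_X5 : psiAux k (X 5) = 0 := by simp only [psiAux, aeval_X]; rfl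

@[simp] lemma sAux_X0 : sAux k (X 0) = X 0 := by simp only [sAux, aeval_X]; rfl
@[simp] lemma sAux_X1 : sAux k (X 1) = X 1 := by simp only [sAux, aeval_X]; rfl
@[simp] lemma sAux_X2 : sAux k (X 2) = X 3 := by simp only [sAux, aeval_X]; rfl
@[simp] lemma sAux_X3 : sAux k (X 3) = X 4 := by simp only [sAux, aeval_X]; rfl

@[simp] lemma thetaAux_X0 : thetaAux k (X 0) = 0 := by simp only [thetaAux, aeval_X]; rfl
@[simp] lemma thetaAux_X1 : thetaAux k (X 1) = 0 := by simp only [thetaAux, aeval_X]; rfl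
@[simp] lemma thetaAux_X2 : thetaAux k (X 2) = Polynomial.X := by
  simp only [thetaAux, aeval_X]; rfl
@[simp] lemma thetaAux_X3 : thetaAux k (X 3) = 0 := by simp only [thetaAux, aeval_X]; rfl
@[simp] lemma thetaAux_X4 : thetaAux k (X 4) = 0 := by simp only [thetaAux, aeval_X]; rfl
@[simp] lemma thetaAux_X5 : thetaAux k (X 5) = 0 := by simp only [thetaAux, aeval_X]; rfl

lemma ker_psiAux :
    RingHom.ker (psiAux k) = Ideal.span ({X 2, X 5} : Set (MvPolynomial (Fin 6) k)) := by
  have hX2 : (X 2 : MvPolynomial (Fin 6) k) ∈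
      Ideal.span ({X 2, X 5} : Set (MvPolynomial (Fin 6) k)) :=
    Ideal.subset_span (Set.mem_insert _ _)
  have hX5 : (X 5 : MvPolynomial (Fin 6) k) ∈
      Ideal.span ({X 2, X 5} : Set (MvPolynomial (Fin 6) k)) :=
    Ideal.subset_span (Set.mem_insert_of_mem _ rfl)
  apply le_antisymm
  · intro p hp
    have h0 : (Ideal.Quotient.mkₐ k
          (Ideal.span ({X 2, X 5} : Set (MvPolynomial (Fin 6) k)))).comp
          ((sAux k).comp (psiAux k))
        = Ideal.Quotient.mkₐ k (Ideal.span ({X 2, X 5} : Set (MvPolynomial (Fin 6) k))) := by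
      apply algHom_ext
      intro i
      fin_cases i
      · simp
      · simp
      · show Ideal.Quotient.mk _ ((sAux k) ((psiAux k) (X 2))) = Ideal.Quotient.mk _ (X 2)
        rw [show ((sAux k) ((psiAux k) (X 2)) : MvPolynomial (Fin 6) k) = 0 by simp,
          map_zero, eq_comm, Ideal.Quotient.eq_zero_iff_mem]
        exact hX2
      · simp
      · simp
      · show Ideal.Quotient.mk _ ((sAux k) ((psiAux k) (X 5))) = Ideal.Quotient.mk _ (X 5)
        rw [show ((sAux k) ((psiAux k) (X 5)) : MvPolynomial (Fin 6) k) = 0 by simp,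
          map_zero, eq_comm, Ideal.Quotient.eq_zero_iff_mem]
        exact hX5
    have hp0 : psiAux k p = 0 := hp
    have := congrArg (fun f => f p) (congrArg DFunLike.coe h0)
    simp only [AlgHom.comp_apply, hp0, map_zero] at this
    rw [eq_comm, Ideal.Quotient.mkₐ_eq_mk, Ideal.Quotient.eq_zero_iff_mem] at this
    exact this
  · rw [Ideal.span_le]
    rintro p (rfl | rfl) <;> simp [RingHom.mem_ker]

end BiProjAux

theorem biproj_iso_but_not_integral
    (k : Type*) [Field k]
    (B : Type*) [CommRing B] [Algebra k B]
    (π : MvPolynomial (Fin 6) k →ₐ[k] B) (hπ : Function.Surjective π)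
    (hker : RingHom.ker π.toRingHom = Ideal.span
      ({X 2 * X 3, X 2 * X 4, X 2 * X 5, X 5 * X 0, X 5 * X 1, X 5 * X 2} :
        Set (MvPolynomial (Fin 6) k)))
    -- the irrelevant ideal `B₊₊`, generated by the products `xᵢ yⱼ`
    (Bpp : Ideal B)
    (hBpp : Bpp = Ideal.span
      (Set.image2 (fun i j => π (X i * X j))
        ({0, 1, 2} : Set (Fin 6)) ({3, 4, 5} : Set (Fin 6))))
    -- the inclusion `A = k[x₁,x₂,y₁,y₂] → B`
    (φ : MvPolynomial (Fin 4) k →ₐ[k] B)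
    (hφ : φ = MvPolynomial.aeval ![π (X 0), π (X 1), π (X 3), π (X 4)]) :
    -- `B/(0 :_B B₊₊) ≅ B/(x₃,y₃)`
    Nonempty ((B ⧸ Submodule.colon (⊥ : Ideal B) Bpp)
        ≃ₐ[k] (B ⧸ Ideal.span ({π (X 2), π (X 5)} : Set B))) ∧
      -- `B/(x₃,y₃) ≅ k[x₁,x₂,y₁,y₂]`
      Nonempty ((B ⧸ Ideal.span ({π (X 2), π (X 5)} : Set B))
        ≃ₐ[k] MvPolynomial (Fin 4) k) ∧
      -- `A → B` is injective
      Function.Injective φ ∧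
      -- `x₃` is not integral over `A`
      ¬ IsIntegral (↥φ.range) (π (X 2)) := by
  classical
  set gens : Set (MvPolynomial (Fin 6) k) :=
    {X 2 * X 3, X 2 * X 4, X 2 * X 5, X 5 * X 0, X 5 * X 1, X 5 * X 2} with hgens
  have hker' : RingHom.ker π = Ideal.span gens := hker
  -- the kernel of π is contained in the kernels of psiAux and thetaAux
  have hkpsi : ∀ a ∈ RingHom.ker π, psiAux k a = 0 := by
    intro a ha
    rw [hker'] at ha
    have h : Ideal.span gens ≤ RingHom.ker (psiAux k) := by
      rw [Ideal.span_le]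
      rintro p (rfl | rfl | rfl | rfl | rfl | rfl) <;> simp [RingHom.mem_ker]
    exact h ha
  have hktheta : ∀ a ∈ RingHom.ker π, thetaAux k a = 0 := by
    intro a ha
    rw [hker'] at ha
    have h : Ideal.span gens ≤ RingHom.ker (thetaAux k) := by
      rw [Ideal.span_le]
      rintro p (rfl | rfl | rfl | rfl | rfl | rfl) <;> simp [RingHom.mem_ker]
    exact h ha
  -- lift psiAux and thetaAux through π
  let e : (MvPolynomial (Fin 6) k ⧸ RingHom.ker π) ≃ₐ[k] B :=
    Ideal.quotientKerAlgEquivOfSurjective hπ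
  have he : ∀ p, e (Ideal.Quotient.mk _ p) = π p := fun p => rfl
  let ψ : B →ₐ[k] MvPolynomial (Fin 4) k :=
    (Ideal.Quotient.liftₐ (RingHom.ker π) (psiAux k) hkpsi).comp e.symm.toAlgHom
  have hψ : ∀ p, ψ (π p) = psiAux k p := by
    intro p
    have hsymm : e.symm (π p) = Ideal.Quotient.mk _ p :=
      (AlgEquiv.symm_apply_eq e).mpr (he p).symm
    show (Ideal.Quotient.liftₐ (RingHom.ker π) (psiAux k) hkpsi) (e.symm (π p)) = _
    rw [hsymm]
    rfl
  let θ : B →ₐ[k] Polynomial k :=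
    (Ideal.Quotient.liftₐ (RingHom.ker π) (thetaAux k) hktheta).comp e.symm.toAlgHom
  have hθ : ∀ p, θ (π p) = thetaAux k p := by
    intro p
    have hsymm : e.symm (π p) = Ideal.Quotient.mk _ p :=
      (AlgEquiv.symm_apply_eq e).mpr (he p).symm
    show (Ideal.Quotient.liftₐ (RingHom.ker π) (thetaAux k) hktheta) (e.symm (π p)) = _
    rw [hsymm]
    rfl
  -- products with a generator of the kernel die
  have hgen : ∀ g ∈ gens, ∀ c : MvPolynomial (Fin 6) k, π (c * g) = 0 := by
    intro g hg c
    have : c * g ∈ RingHom.ker π := by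
      rw [hker']
      exact Ideal.mul_mem_left _ _ (Ideal.subset_span hg)
    exact this
  -- the colon ideal equals (x₃, y₃)
  have hmapJ : Ideal.span ({π (X 2), π (X 5)} : Set B)
      = Ideal.map π (Ideal.span ({X 2, X 5} : Set (MvPolynomial (Fin 6) k))) := by
    rw [Ideal.map_span, Set.image_pair]
  have hcolon : Submodule.colon (⊥ : Ideal B) Bpp
      = Ideal.span ({π (X 2), π (X 5)} : Set B) := by
    apply le_antisymm
    · intro x hx
      obtain ⟨p, rfl⟩ := hπ x
      rw [Submodule.mem_colon] at hx
      have hmem : π (X 0 * X 3) ∈ Bpp := by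
        rw [hBpp]
        exact Ideal.subset_span ⟨0, by norm_num, 3, by norm_num, rfl⟩
      have h1 : π p * π (X 0 * X 3) = 0 := by
        have := hx _ hmem
        simpa using this
      have h2 : p * (X 0 * X 3) ∈ RingHom.ker π := by
        rw [RingHom.mem_ker, map_mul]
        exact h1
      have h3 : psiAux k (p * (X 0 * X 3)) = 0 := hkpsi _ h2
      have h4 : psiAux k p * (X 0 * X 2) = 0 := by
        rw [map_mul, map_mul, psiAux_X0, psiAux_X3] at h3
        exact h3
      have h5 : psiAux k p = 0 := by
        rcases mul_eq_zero.mp h4 with h | h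
        · exact h
        · exact absurd h (mul_ne_zero (X_ne_zero _) (X_ne_zero _))
      have h6 : p ∈ Ideal.span ({X 2, X 5} : Set (MvPolynomial (Fin 6) k)) := by
        rw [← ker_psiAux k]
        exact h5
      rw [hmapJ]
      exact Ideal.mem_map_of_mem π h6
    · rw [Ideal.span_le]
      have hkill2 : ∀ b ∈ Bpp, π (X 2) • b ∈ (⊥ : Ideal B) := by
        intro b hb
        rw [hBpp] at hb
        have : Ideal.span (Set.image2 (fun i j => π (X i * X j))
            ({0, 1, 2} : Set (Fin 6)) ({3, 4, 5} : Set (Fin 6)))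
            ≤ LinearMap.ker (LinearMap.mulLeft B (π (X 2))) := by
          rw [Ideal.span_le]
          rintro _ ⟨i, hi, j, hj, rfl⟩
          have h2j : (X 2 * X j : MvPolynomial (Fin 6) k) ∈ gens := by
            rcases hj with rfl | rfl | rfl
            · exact Or.inl rfl
            · exact Or.inr (Or.inl rfl)
            · exact Or.inr (Or.inr (Or.inl rfl))
          show π (X 2) * π (X i * X j) = 0
          rw [← map_mul, show (X 2 : MvPolynomial (Fin 6) k) * (X i * X j)
            = X i * (X 2 * X j) by ring]
          exact hgen _ h2j _
        have := this hb
        simpa using this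
      have hkill5 : ∀ b ∈ Bpp, π (X 5) • b ∈ (⊥ : Ideal B) := by
        intro b hb
        rw [hBpp] at hb
        have : Ideal.span (Set.image2 (fun i j => π (X i * X j))
            ({0, 1, 2} : Set (Fin 6)) ({3, 4, 5} : Set (Fin 6)))
            ≤ LinearMap.ker (LinearMap.mulLeft B (π (X 5))) := by
          rw [Ideal.span_le]
          rintro _ ⟨i, hi, j, hj, rfl⟩
          have h5i : (X 5 * X i : MvPolynomial (Fin 6) k) ∈ gens := by
            rcases hi with rfl | rfl | rfl
            · exact Or.inr (Or.inr (Or.inr (Or.inl rfl)))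
            · exact Or.inr (Or.inr (Or.inr (Or.inr (Or.inl rfl))))
            · exact Or.inr (Or.inr (Or.inr (Or.inr (Or.inr rfl))))
          show π (X 5) * π (X i * X j) = 0
          rw [← map_mul, show (X 5 : MvPolynomial (Fin 6) k) * (X i * X j)
            = X j * (X 5 * X i) by ring]
          exact hgen _ h5i _
        have := this hb
        simpa using this
      rintro x (rfl | rfl)
      · exact Submodule.mem_colon.mpr hkill2
      · exact Submodule.mem_colon.mpr hkill5
  -- ψ kills the ideal (x₃, y₃)
  have hψkill : ∀ b ∈ Ideal.span ({π (X 2), π (X 5)} : Set B), ψ b = 0 := by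
    intro b hb
    have : Ideal.span ({π (X 2), π (X 5)} : Set B) ≤ RingHom.ker ψ := by
      rw [Ideal.span_le]
      rintro x (rfl | rfl) <;> simp [RingHom.mem_ker, hψ]
    exact this hb
  -- the equivalence B/(x₃,y₃) ≅ k[x₁,x₂,y₁,y₂]
  let Φ : (B ⧸ Ideal.span ({π (X 2), π (X 5)} : Set B)) →ₐ[k] MvPolynomial (Fin 4) k :=
    Ideal.Quotient.liftₐ _ ψ hψkill
  have hΦmk : ∀ b : B, Φ (Ideal.Quotient.mk _ b) = ψ b := by
    intro b
    show Ideal.Quotient.liftₐ _ ψ hψkill (Ideal.Quotient.mk _ b) = ψ b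
    rfl
  let s' : MvPolynomial (Fin 4) k →ₐ[k]
      (B ⧸ Ideal.span ({π (X 2), π (X 5)} : Set B)) :=
    (Ideal.Quotient.mkₐ k _).comp (π.comp (sAux k))
  have h1 : Φ.comp s' = AlgHom.id k (MvPolynomial (Fin 4) k) := by
    apply algHom_ext
    intro i
    fin_cases i
    · show Φ (Ideal.Quotient.mk _ (π (sAux k (X 0)))) = X 0
      rw [hΦmk, hψ]; simp
    · show Φ (Ideal.Quotient.mk _ (π (sAux k (X 1)))) = X 1
      rw [hΦmk, hψ]; simp
    · show Φ (Ideal.Quotient.mk _ (π (sAux k (X 2)))) = X 2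
      rw [hΦmk, hψ]; simp
    · show Φ (Ideal.Quotient.mk _ (π (sAux k (X 3)))) = X 3
      rw [hΦmk, hψ]; simp
  have h2 : s'.comp Φ = AlgHom.id k _ := by
    have hsurj : Function.Surjective
        ((Ideal.Quotient.mkₐ k (Ideal.span ({π (X 2), π (X 5)} : Set B))).comp π) :=
      (Ideal.Quotient.mkₐ_surjective k _).comp hπ
    have hcomp : ((s'.comp Φ).comp ((Ideal.Quotient.mkₐ k _).comp π))
        = (Ideal.Quotient.mkₐ k _).comp π := by
      apply algHom_ext
      intro i
      fin_cases i
      · show s' (Φ (Ideal.Quotient.mk _ (π (X 0)))) = Ideal.Quotient.mk _ (π (X 0))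
        rw [hΦmk, hψ, psiAux_X0]
        show Ideal.Quotient.mk _ (π (sAux k (X 0))) = _
        rw [sAux_X0]
      · show s' (Φ (Ideal.Quotient.mk _ (π (X 1)))) = Ideal.Quotient.mk _ (π (X 1))
        rw [hΦmk, hψ, psiAux_X1]
        show Ideal.Quotient.mk _ (π (sAux k (X 1))) = _
        rw [sAux_X1]
      · show s' (Φ (Ideal.Quotient.mk _ (π (X 2)))) = Ideal.Quotient.mk _ (π (X 2))
        rw [hΦmk, hψ, psiAux_X2, map_zero, eq_comm, Ideal.Quotient.eq_zero_iff_mem]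
        exact Ideal.subset_span (Set.mem_insert _ _)
      · show s' (Φ (Ideal.Quotient.mk _ (π (X 3)))) = Ideal.Quotient.mk _ (π (X 3))
        rw [hΦmk, hψ, psiAux_X3]
        show Ideal.Quotient.mk _ (π (sAux k (X 2))) = _
        rw [sAux_X2]
      · show s' (Φ (Ideal.Quotient.mk _ (π (X 4)))) = Ideal.Quotient.mk _ (π (X 4))
        rw [hΦmk, hψ, psiAux_X4]
        show Ideal.Quotient.mk _ (π (sAux k (X 3))) = _
        rw [sAux_X3]
      · show s' (Φ (Ideal.Quotient.mk _ (π (X 5)))) = Ideal.Quotient.mk _ (π (X 5))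
        rw [hΦmk, hψ, psiAux_X5, map_zero, eq_comm, Ideal.Quotient.eq_zero_iff_mem]
        exact Ideal.subset_span (Set.mem_insert_of_mem _ rfl)
    apply AlgHom.ext
    intro b
    obtain ⟨p, rfl⟩ := hsurj b
    exact congrArg (fun f => f p) (congrArg DFunLike.coe hcomp)
  refine ⟨⟨Ideal.quotientEquivAlgOfEq k hcolon⟩, ⟨AlgEquiv.ofAlgHom Φ s' h1 h2⟩, ?_, ?_⟩
  -- injectivity of φ
  · have hψφ : ψ.comp φ = AlgHom.id k (MvPolynomial (Fin 4) k) := by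
      apply algHom_ext
      intro i
      rw [hφ]
      fin_cases i
      · show ψ ((aeval ![π (X 0), π (X 1), π (X 3), π (X 4)]) (X 0)) = X 0
        rw [show ((aeval ![π (X 0), π (X 1), π (X 3), π (X 4)]) (X 0) : B) = π (X 0) by
          simp only [aeval_X]; rfl, hψ]
        simp
      · show ψ ((aeval ![π (X 0), π (X 1), π (X 3), π (X 4)]) (X 1)) = X 1
        rw [show ((aeval ![π (X 0), π (X 1), π (X 3), π (X 4)]) (X 1) : B) = π (X 1) by
          simp only [aeval_X]; rfl, hψ]
        simp
      · show ψ ((aeval ![π (X 0), π (X 1), π (X 3), π (X 4)]) (X 2)) = X 2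
        rw [show ((aeval ![π (X 0), π (X 1), π (X 3), π (X 4)]) (X 2) : B) = π (X 3) by
          simp only [aeval_X]; rfl, hψ]
        simp
      · show ψ ((aeval ![π (X 0), π (X 1), π (X 3), π (X 4)]) (X 3)) = X 3
        rw [show ((aeval ![π (X 0), π (X 1), π (X 3), π (X 4)]) (X 3) : B) = π (X 4) by
          simp only [aeval_X]; rfl, hψ]
        simp
    have : Function.LeftInverse ψ φ := fun q =>
      congrArg (fun f => f q) (congrArg DFunLike.coe hψφ)
    exact this.injective
  -- non-integrality of x₃
  · intro hint
    obtain ⟨P, hPmonic, hPeval⟩ := hint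
    -- θ maps the image of φ into the constants
    have hφX : ∀ i : Fin 4, θ (φ (X i)) = 0 := by
      intro i
      rw [hφ]
      fin_cases i
      · show θ ((aeval ![π (X 0), π (X 1), π (X 3), π (X 4)]) (X 0)) = 0
        rw [show ((aeval ![π (X 0), π (X 1), π (X 3), π (X 4)]) (X 0) : B) = π (X 0) by
          simp only [aeval_X]; rfl, hθ]
        simp
      · show θ ((aeval ![π (X 0), π (X 1), π (X 3), π (X 4)]) (X 1)) = 0
        rw [show ((aeval ![π (X 0), π (X 1), π (X 3), π (X 4)]) (X 1) : B) = π (X 1) by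
          simp only [aeval_X]; rfl, hθ]
        simp
      · show θ ((aeval ![π (X 0), π (X 1), π (X 3), π (X 4)]) (X 2)) = 0
        rw [show ((aeval ![π (X 0), π (X 1), π (X 3), π (X 4)]) (X 2) : B) = π (X 3) by
          simp only [aeval_X]; rfl, hθ]
        simp
      · show θ ((aeval ![π (X 0), π (X 1), π (X 3), π (X 4)]) (X 3)) = 0
        rw [show ((aeval ![π (X 0), π (X 1), π (X 3), π (X 4)]) (X 3) : B) = π (X 4) by
          simp only [aeval_X]; rfl, hθ]
        simp
    have hconstrange : ∀ q : MvPolynomial (Fin 4) k,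
        θ (φ q) = Polynomial.C (aeval (fun _ => (0:k)) q) := by
      intro q
      have : θ.comp φ = ((Algebra.ofId k (Polynomial k)).comp
          (aeval (fun _ => (0:k)) : MvPolynomial (Fin 4) k →ₐ[k] k)) := by
        apply algHom_ext
        intro i
        simp [hφX i, Algebra.ofId_apply]
      have := congrArg (fun f => f q) (congrArg DFunLike.coe this)
      simpa [Algebra.ofId_apply, Polynomial.algebraMap_eq] using this
    -- the coefficient map to k
    let g : ↥φ.range →+* k :=
      (Polynomial.constantCoeff).comp (θ.toRingHom.comp (Subalgebra.val φ.range).toRingHom)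
    have hCg : (Polynomial.C : k →+* Polynomial k).comp g
        = θ.toRingHom.comp (algebraMap ↥φ.range B) := by
      apply RingHom.ext
      intro a
      obtain ⟨q, hq⟩ := a.2
      show Polynomial.C (Polynomial.constantCoeff (θ (a : B))) = θ (a : B)
      rw [show ((a : B)) = φ q from hq.symm, hconstrange]
      simp
    -- transport the integrality relation along θ
    have h0 : Polynomial.eval₂ (θ.toRingHom.comp (algebraMap ↥φ.range B))
        (θ.toRingHom (π (X 2))) P = 0 := by
      have h := Polynomial.hom_eval₂ P (algebraMap ↥φ.range B) θ.toRingHom (π (X 2))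
      rw [hPeval, map_zero] at h
      exact h.symm
    have hθX2 : θ.toRingHom (π (X 2)) = Polynomial.X := by
      show θ (π (X 2)) = Polynomial.X
      rw [hθ, thetaAux_X2]
    rw [← hCg, hθX2] at h0
    have h0' : Polynomial.eval₂ Polynomial.C Polynomial.X (P.map g) = 0 := by
      rw [Polynomial.eval₂_map]
      exact h0
    rw [Polynomial.eval₂_C_X] at h0'
    exact (hPmonic.map g).ne_zero h0'
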